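/- Lower bound on the price of competition on profits (PoCP): Consider the two-AP symmetric linear market with interference coefficient a ∈ [0,1), congestion functions l_1(x) = x_1 + a·x_2, l_2(x) = a·x_1 + x_2, and inverse demand u(x) = w − s·x, w, s > 0. The monopoly total profit is Π^ME = (w/2)·(w/(1+a+2s)) = w²/(2(1+a+2s)) and the duopoly total profit is Π^DE = 2·(w(1−a)/(2+s−a))·(w(1+s)/((2+s−a)(1+2s+a))). Then Π^ME/Π^DE = (s − a + 2)² / (4(1−a)(s+1)) ≥ 1. -/

import Mathlib

/-- **Lower bound on the price of competition on profits (PoCP).**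
In the symmetric two-AP linear market with `a ∈ [0,1)`, `w, s > 0`, the monopoly total
profit is `Π^ME = (w/2)·(w/(1+a+2s))`, the duopoly total profit is
`Π^DE = 2·(w(1−a)/(2+s−a))·(w(1+s)/((2+s−a)(1+2s+a)))`, and
`Π^ME/Π^DE = (s−a+2)² / (4(1−a)(s+1)) ≥ 1`. -/
theorem pocp_lower_bound
    (a w s : ℝ) (ha0 : 0 ≤ a) (ha1 : a < 1) (hw : 0 < w) (hs : 0 < s)
    (PiME PiDE : ℝ)
    (hME : PiME = (w / 2) * (w / (1 + a + 2 * s)))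
    (hDE : PiDE = 2 * (w * (1 - a) / (2 + s - a)) *
                    (w * (1 + s) / ((2 + s - a) * (1 + 2 * s + a)))) :
    PiME = w ^ 2 / (2 * (1 + a + 2 * s)) ∧
    PiME / PiDE = (s - a + 2) ^ 2 / (4 * (1 - a) * (s + 1)) ∧
    1 ≤ PiME / PiDE := by
  have h1 : (0:ℝ) < 1 + a + 2 * s := by linarith
  have h2 : (0:ℝ) < 2 + s - a := by linarith
  have h3 : (0:ℝ) < 1 + 2 * s + a := by linarith
  have h4 : (0:ℝ) < 1 - a := by linarith
  have h5 : (0:ℝ) < 1 + s := by linarith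
  have key : PiME / PiDE = (s - a + 2) ^ 2 / (4 * (1 - a) * (s + 1)) := by
    rw [hME, hDE]
    field_simp
    ring
  refine ⟨by rw [hME]; field_simp, key, ?_⟩
  rw [key]
  rw [le_div_iff₀ (by positivity)]
  nlinarith [sq_nonneg (s + a), sq_nonneg (s - a), sq_nonneg (s - 1 + a)]
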